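/- Let H be a real inner product space, z_1,…,z_n ∈ H and Λ > 0. Then E_σ[sup_{w ∈ H, ‖w‖ ≤ Λ} |(2/n)·∑_{i=1}^n σ_i·⟨w, z_i⟩|] ≤ (2Λ/n)·√(∑_{i=1}^n ‖z_i‖²), where σ_1,…,σ_n are independent uniform {−1,+1}-valued random variables. -/

import Mathlib

open Finset

noncomputable section

private def sgn (b : Bool) : ℝ := if b then 1 else -1

private lemma sgn_sq (b : Bool) : sgn b * sgn b = 1 := by cases b <;> simp [sgn]

private lemma sum_sgn_mul_sgn {n : ℕ} {i j : Fin n} (hij : i ≠ j) (c : ℝ) :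
    ∑ ε : Fin n → Bool, sgn (ε i) * sgn (ε j) * c = 0 := by
  classical
  apply Finset.sum_ninvolution (fun ε => Function.update ε i (!(ε i)))
  · intro ε
    have hji : j ≠ i := hij.symm
    simp only [Function.update_self, Function.update_of_ne hji]
    cases ε i <;> cases ε j <;> simp [sgn]
  · intro ε _ hc
    have := congrFun hc i
    simp [Function.update_self] at this
  · intro ε; exact Finset.mem_univ _
  · intro ε
    funext k
    by_cases hk : k = i
    · subst hk; simp
    · simp [Function.update_of_ne hk]

private lemma sSup_abs_inner {H : Type*} [NormedAddCommGroup H] [InnerProductSpace ℝ H]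
    (v : H) {Λ : ℝ} (hΛ : 0 < Λ) :
    sSup {r : ℝ | ∃ w : H, ‖w‖ ≤ Λ ∧ r = |(inner ℝ w v : ℝ)|} = Λ * ‖v‖ := by
  have hne : (0:ℝ) ∈ {r : ℝ | ∃ w : H, ‖w‖ ≤ Λ ∧ r = |(inner ℝ w v : ℝ)|} :=
    ⟨0, by simp [hΛ.le], by simp⟩
  apply le_antisymm
  · apply csSup_le ⟨0, hne⟩
    rintro r ⟨w, hw, rfl⟩
    calc |(inner ℝ w v : ℝ)| ≤ ‖w‖ * ‖v‖ := abs_real_inner_le_norm w v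
    _ ≤ Λ * ‖v‖ := by
        apply mul_le_mul_of_nonneg_right hw (norm_nonneg v)
  · apply le_csSup
    · refine ⟨Λ * ‖v‖, ?_⟩
      rintro r ⟨w, hw, rfl⟩
      calc |(inner ℝ w v : ℝ)| ≤ ‖w‖ * ‖v‖ := abs_real_inner_le_norm w v
      _ ≤ Λ * ‖v‖ := mul_le_mul_of_nonneg_right hw (norm_nonneg v)
    · rcases eq_or_ne v 0 with rfl | hv
      · exact ⟨0, by simp [hΛ.le]⟩
      · refine ⟨(Λ / ‖v‖) • v, ?_, ?_⟩
        · have : ‖(Λ / ‖v‖) • v‖ = Λ := by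
            rw [norm_smul, Real.norm_eq_abs, abs_div, abs_of_pos hΛ,
              abs_of_pos (norm_pos_iff.mpr hv), div_mul_cancel₀]
            exact (norm_pos_iff.mpr hv).ne'
          rw [this]
        · have hv' : ‖v‖ ≠ 0 := norm_ne_zero_iff.mpr hv
          rw [real_inner_smul_left, real_inner_self_eq_norm_sq]
          rw [abs_of_nonneg (by positivity)]
          field_simp

private lemma sum_norm_sq_S {H : Type*} [NormedAddCommGroup H] [InnerProductSpace ℝ H]
    {n : ℕ} (z : Fin n → H) :
    ∑ ε : Fin n → Bool, ‖∑ i, sgn (ε i) • z i‖ ^ 2 = 2 ^ n * ∑ i, ‖z i‖ ^ 2 := by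
  have expand : ∀ ε : Fin n → Bool, ‖∑ i, sgn (ε i) • z i‖ ^ 2
      = ∑ i, ∑ j, sgn (ε i) * sgn (ε j) * (inner ℝ (z i) (z j) : ℝ) := by
    intro ε
    rw [← real_inner_self_eq_norm_sq, sum_inner]
    refine Finset.sum_congr rfl fun i _ => ?_
    rw [real_inner_smul_left, inner_sum]
    rw [Finset.mul_sum]
    refine Finset.sum_congr rfl fun j _ => ?_
    rw [real_inner_smul_right]
    ring
  simp_rw [expand]
  rw [Finset.sum_comm]
  rw [Finset.sum_congr rfl (fun i _ => Finset.sum_comm)]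
  have diag : ∀ i j : Fin n,
      ∑ ε : Fin n → Bool, sgn (ε i) * sgn (ε j) * (inner ℝ (z i) (z j) : ℝ)
      = if i = j then 2 ^ n * ‖z i‖ ^ 2 else 0 := by
    intro i j
    by_cases hij : i = j
    · subst hij
      simp only [if_pos rfl]
      have : ∀ ε : Fin n → Bool, sgn (ε i) * sgn (ε i) * (inner ℝ (z i) (z i) : ℝ)
          = ‖z i‖ ^ 2 := by
        intro ε; rw [sgn_sq, one_mul, real_inner_self_eq_norm_sq]
      simp_rw [this]
      rw [Finset.sum_const, Finset.card_univ, Fintype.card_fun]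
      simp [mul_comm]
    · rw [if_neg hij]
      exact sum_sgn_mul_sgn hij _
  rw [Finset.sum_congr rfl (fun i _ => Finset.sum_congr rfl (fun j _ => diag i j))]
  rw [Finset.mul_sum]
  refine Finset.sum_congr rfl fun i _ => ?_
  rw [Finset.sum_ite_eq]
  simp

/-- The empirical Rademacher complexity of the norm-bounded linear class
`{x ↦ ⟪w, z⟫ : ‖w‖ ≤ Λ}` is bounded by `(2Λ/n)·√(∑ᵢ ‖zᵢ‖²)`. -/
theorem erc_linear_class_bound
    {H : Type*} [NormedAddCommGroup H] [InnerProductSpace ℝ H]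
    (n : ℕ) (z : Fin n → H) (Λ : ℝ) (hΛ : 0 < Λ) :
    (∑ ε : Fin n → Bool,
        sSup {r : ℝ | ∃ w : H, ‖w‖ ≤ Λ ∧
          r = |(2 / (n : ℝ)) * ∑ i, (if ε i then (1 : ℝ) else -1) * (inner ℝ w (z i) : ℝ)|}) / 2 ^ n
      ≤ (2 * Λ / n) * Real.sqrt (∑ i, ‖z i‖ ^ 2) := by
  set S : (Fin n → Bool) → H := fun ε => ∑ i, sgn (ε i) • z i with hS
  have hset : ∀ ε : Fin n → Bool,
      {r : ℝ | ∃ w : H, ‖w‖ ≤ Λ ∧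
          r = |(2 / (n : ℝ)) * ∑ i, (if ε i then (1 : ℝ) else -1) * (inner ℝ w (z i) : ℝ)|}
      = {r : ℝ | ∃ w : H, ‖w‖ ≤ Λ ∧ r = |(inner ℝ w ((2 / (n : ℝ)) • S ε) : ℝ)|} := by
    intro ε
    have key : ∀ w : H, (2 / (n : ℝ)) * ∑ i, (if ε i then (1 : ℝ) else -1) * (inner ℝ w (z i) : ℝ)
        = (inner ℝ w ((2 / (n : ℝ)) • S ε) : ℝ) := by
      intro w
      rw [real_inner_smul_right, hS, inner_sum]
      congr 1
      refine Finset.sum_congr rfl fun i _ => ?_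
      rw [real_inner_smul_right]
      simp [sgn]
    ext r
    simp only [Set.mem_setOf_eq, key]
  have hsup : ∀ ε : Fin n → Bool,
      sSup {r : ℝ | ∃ w : H, ‖w‖ ≤ Λ ∧
          r = |(2 / (n : ℝ)) * ∑ i, (if ε i then (1 : ℝ) else -1) * (inner ℝ w (z i) : ℝ)|}
      = Λ * ‖(2 / (n : ℝ)) • S ε‖ := by
    intro ε
    rw [hset ε, sSup_abs_inner _ hΛ]
  rw [Finset.sum_congr rfl fun ε _ => hsup ε]
  have hnorm : ∀ ε : Fin n → Bool, ‖(2 / (n : ℝ)) • S ε‖ = (2 / (n : ℝ)) * ‖S ε‖ := by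
    intro ε
    rw [norm_smul, Real.norm_eq_abs, abs_of_nonneg (by positivity)]
  simp_rw [hnorm]
  -- now LHS = (∑ ε, Λ * (2/n * ‖S ε‖)) / 2^n
  have hCS : (∑ ε : Fin n → Bool, ‖S ε‖) ≤ 2 ^ n * Real.sqrt (∑ i, ‖z i‖ ^ 2) := by
    have h1 := Finset.sum_mul_sq_le_sq_mul_sq Finset.univ
      (fun _ : Fin n → Bool => (1:ℝ)) (fun ε => ‖S ε‖)
    simp only [one_mul, one_pow, Finset.sum_const, nsmul_eq_mul, mul_one,
      Finset.card_univ] at h1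
    rw [sum_norm_sq_S z] at h1
    have hcard : (Fintype.card (Fin n → Bool) : ℝ) = 2 ^ n := by
      simp [Fintype.card_fun]
    rw [hcard] at h1
    have h2 : (∑ ε : Fin n → Bool, ‖S ε‖) ≤ Real.sqrt ((2:ℝ) ^ n * ((2:ℝ) ^ n * ∑ i, ‖z i‖ ^ 2)) := by
      rw [← Real.sqrt_sq (Finset.sum_nonneg fun ε _ => norm_nonneg _)]
      apply Real.sqrt_le_sqrt
      exact h1
    calc (∑ ε : Fin n → Bool, ‖S ε‖)
        ≤ Real.sqrt ((2:ℝ) ^ n * ((2:ℝ) ^ n * ∑ i, ‖z i‖ ^ 2)) := h2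
      _ = 2 ^ n * Real.sqrt (∑ i, ‖z i‖ ^ 2) := by
          rw [← mul_assoc, show (2:ℝ) ^ n * 2 ^ n = ((2:ℝ) ^ n) ^ 2 by ring,
            Real.sqrt_mul (by positivity), Real.sqrt_sq (by positivity)]
  have h2n : (0:ℝ) < 2 ^ n := by positivity
  rw [div_le_iff₀ h2n]
  calc (∑ ε : Fin n → Bool, Λ * (2 / (n : ℝ) * ‖S ε‖))
      = Λ * (2 / (n : ℝ)) * ∑ ε : Fin n → Bool, ‖S ε‖ := by
        rw [Finset.mul_sum]; exact Finset.sum_congr rfl fun ε _ => by ring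
    _ ≤ Λ * (2 / (n : ℝ)) * (2 ^ n * Real.sqrt (∑ i, ‖z i‖ ^ 2)) := by
        apply mul_le_mul_of_nonneg_left hCS (by positivity)
    _ = (2 * Λ / n) * Real.sqrt (∑ i, ‖z i‖ ^ 2) * 2 ^ n := by ring
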